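/- Let S be segments with congestion c = cong(S), and suppose N̂ satisfies N̂ ≤ N ≤ γ'·N̂ where N = max over cells Q of the number of α-long segments of Q, and γ' = (1+δ)²/(1−δ). Then the quantity ĉ = N̂·α/(1+α) satisfies long-cong(T)/(√8 · γ' · (1+α)/α) ≤ ĉ ≤ c, where long-cong(T) is the maximum α-long congestion over all cells of the quadtree T. -/

import Mathlib

open Real MeasureTheory

/-- The axis-parallel square (`L∞`-ball) centered at `p` of radius `r` (side length `2r`). -/
def square (p : EuclideanSpace ℝ (Fin 2)) (r : ℝ) : Set (EuclideanSpace ℝ (Fin 2)) :=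
  {x | ∀ i, |x i - p i| ≤ r}

lemma coord_le_dist (a b : EuclideanSpace ℝ (Fin 2)) (i : Fin 2) :
    |a i - b i| ≤ dist a b := by
  rw [EuclideanSpace.dist_eq]
  calc |a i - b i| = Real.sqrt (dist (a i) (b i) ^ 2) := by
        rw [Real.dist_eq, Real.sqrt_sq_eq_abs, abs_abs]
    _ ≤ _ := Real.sqrt_le_sqrt (Finset.single_le_sum (f := fun j => dist (a j) (b j) ^ 2)
        (fun j _ => sq_nonneg _) (Finset.mem_univ i))

lemma dist_le_sqrt2_mul (x y : EuclideanSpace ℝ (Fin 2)) :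
    dist x y ≤ Real.sqrt 2 * max (|x 0 - y 0|) (|x 1 - y 1|) := by
  set m := max (|x 0 - y 0|) (|x 1 - y 1|) with hm
  have hm0 : 0 ≤ m := le_trans (abs_nonneg _) (le_max_left _ _)
  rw [EuclideanSpace.dist_eq, Fin.sum_univ_two]
  have h2 : dist (x 0) (y 0) ^ 2 + dist (x 1) (y 1) ^ 2 ≤ 2 * m ^ 2 := by
    have h0 : dist (x 0) (y 0) ≤ m := by rw [Real.dist_eq]; exact le_max_left _ _
    have h1 : dist (x 1) (y 1) ≤ m := by rw [Real.dist_eq]; exact le_max_right _ _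
    nlinarith [dist_nonneg (x := x 0) (y := y 0), dist_nonneg (x := x 1) (y := y 1)]
  calc Real.sqrt (dist (x 0) (y 0) ^ 2 + dist (x 1) (y 1) ^ 2)
      ≤ Real.sqrt (2 * m ^ 2) := Real.sqrt_le_sqrt h2
    _ = Real.sqrt 2 * m := by
        rw [Real.sqrt_mul (by norm_num), Real.sqrt_sq hm0]

lemma sqrt8_eq : Real.sqrt 8 = 2 * Real.sqrt 2 := by
  rw [show (8:ℝ) = 2^2 * 2 by norm_num, Real.sqrt_mul (by positivity), Real.sqrt_sq (by norm_num)]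

-- coordinate of lineMap
lemma lineMap_coord (x y : EuclideanSpace ℝ (Fin 2)) (t : ℝ) (i : Fin 2) :
    (AffineMap.lineMap x y t) i = x i + t * (y i - x i) := by
  simp [AffineMap.lineMap_apply_module]
  ring

lemma clip_le (x y p : EuclideanSpace ℝ (Fin 2)) (r : ℝ) (hr : 0 ≤ r) :
    μH[1] (segment ℝ x y ∩ square p r) ≤ ENNReal.ofReal (Real.sqrt 8 * r) := by
  set m := max (|x 0 - y 0|) (|x 1 - y 1|) with hm
  rcases eq_or_lt_of_le (le_trans (abs_nonneg _) (le_max_left _ _) : (0:ℝ) ≤ m) with hm0 | hm0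
  · -- m = 0, so x = y
    have hxy : x = y := by
      have hd : dist x y ≤ 0 := by
        have := dist_le_sqrt2_mul x y
        rw [← hm, ← hm0, mul_zero] at this
        exact this
      exact dist_le_zero.mp hd
    subst hxy
    calc μH[1] (segment ℝ x x ∩ square p r) ≤ μH[1] (segment ℝ x x) :=
          measure_mono Set.inter_subset_left
      _ = edist x x := hausdorffMeasure_segment x x
      _ = 0 := edist_self x
      _ ≤ _ := zero_le
  · -- m > 0
    obtain ⟨i, hi⟩ : ∃ i : Fin 2, |x i - y i| = m := by
      rcases max_cases (|x 0 - y 0|) (|x 1 - y 1|) with ⟨h, _⟩ | ⟨h, _⟩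
      exacts [⟨0, h.symm⟩, ⟨1, h.symm⟩]
    set A : Set ℝ := Set.Icc (0:ℝ) 1 ∩ (AffineMap.lineMap x y) ⁻¹' (square p r) with hA
    have himg : segment ℝ x y ∩ square p r = (AffineMap.lineMap x y) '' A := by
      rw [hA, Set.image_inter_preimage, ← segment_eq_image_lineMap]
    rw [himg, MeasureTheory.hausdorffMeasure_lineMap_image]
    have hAdiam : EMetric.diam A ≤ ENNReal.ofReal (2 * r / m) := by
      apply EMetric.diam_le
      intro s hs t ht
      rw [edist_dist, Real.dist_eq]
      apply ENNReal.ofReal_le_ofReal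
      have hsv : |x i + s * (y i - x i) - p i| ≤ r := by
        have := hs.2 i; rwa [lineMap_coord] at this
      have htv : |x i + t * (y i - x i) - p i| ≤ r := by
        have := ht.2 i; rwa [lineMap_coord] at this
      have key : |s - t| * |x i - y i| ≤ 2 * r := by
        have : |s - t| * |x i - y i| = |(x i + s * (y i - x i) - p i) - (x i + t * (y i - x i) - p i)| := by
          rw [abs_sub_comm (x i) (y i), ← abs_mul]
          congr 1; ring
        rw [this]
        calc |(x i + s * (y i - x i) - p i) - (x i + t * (y i - x i) - p i)|
            ≤ |x i + s * (y i - x i) - p i| + |x i + t * (y i - x i) - p i| := abs_sub _ _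
          _ ≤ r + r := add_le_add hsv htv
          _ = 2 * r := by ring
      rw [hi] at key
      exact (le_div_iff₀ hm0).mpr key
    have hvol : μH[1] A ≤ ENNReal.ofReal (2 * r / m) := by
      rw [MeasureTheory.hausdorffMeasure_real]
      exact le_trans (Real.volume_le_diam A) hAdiam
    calc nndist x y • μH[1] A = ENNReal.ofReal (dist x y) * μH[1] A := by
          rw [ENNReal.smul_def, smul_eq_mul, ← edist_nndist, edist_dist]
      _ ≤ ENNReal.ofReal (dist x y) * ENNReal.ofReal (2 * r / m) := by
          exact mul_le_mul_right hvol _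
      _ = ENNReal.ofReal (dist x y * (2 * r / m)) := (ENNReal.ofReal_mul dist_nonneg).symm
      _ ≤ ENNReal.ofReal (Real.sqrt 8 * r) := by
          apply ENNReal.ofReal_le_ofReal
          have hd : dist x y ≤ Real.sqrt 2 * m := dist_le_sqrt2_mul x y
          have h2r : 0 ≤ 2 * r / m := by positivity
          calc dist x y * (2 * r / m) ≤ Real.sqrt 2 * m * (2 * r / m) := by
                exact mul_le_mul_of_nonneg_right hd h2r
            _ = 2 * Real.sqrt 2 * r := by field_simp
            _ = Real.sqrt 8 * r := by rw [sqrt8_eq]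

lemma clip_ge (x y p : EuclideanSpace ℝ (Fin 2)) {r a : ℝ} (hr : 0 < r) (ha : 0 < a)
    (hlen : a * r ≤ dist x y) (hne : (segment ℝ x y ∩ square p r).Nonempty) :
    ENNReal.ofReal (a * r) ≤ μH[1] (segment ℝ x y ∩ square p ((1 + a) * r)) := by
  obtain ⟨x₀, hx₀seg, hx₀sq⟩ := hne
  rw [segment_eq_image_lineMap] at hx₀seg
  obtain ⟨t₀, ht₀, hx₀⟩ := hx₀seg
  set L := dist x y with hL
  have hL0 : 0 < L := lt_of_lt_of_le (by positivity) hlen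
  set A := t₀ * L with hA
  set B := (1 - t₀) * L with hB
  have hA0 : 0 ≤ A := mul_nonneg ht₀.1 hL0.le
  have hB0 : 0 ≤ B := mul_nonneg (by linarith [ht₀.2]) hL0.le
  have hAB : A + B = L := by rw [hA, hB]; ring
  set t₁ := t₀ - min A (a * r) / L with ht₁
  set t₂ := t₀ + min B (a * r) / L with ht₂
  have har : 0 < a * r := by positivity
  have ht₁0 : 0 ≤ t₁ := by
    have : min A (a * r) / L ≤ A / L := by gcongr; exact min_le_left _ _
    have hAL : A / L = t₀ := by field_simp [hA]; rw [hA]; ring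
    simp only [ht₁]; linarith
  have ht₂1 : t₂ ≤ 1 := by
    have : min B (a * r) / L ≤ B / L := by gcongr; exact min_le_left _ _
    have hBL : B / L = 1 - t₀ := by field_simp [hB]; rw [hB]; ring
    simp only [ht₂]; linarith
  have hmin1 : 0 ≤ min A (a * r) / L := by positivity
  have hmin2 : 0 ≤ min B (a * r) / L := by positivity
  have ht₁₂ : t₁ ≤ t₂ := by simp only [ht₁, ht₂]; linarith
  set u := AffineMap.lineMap x y t₁ with hu
  set v := AffineMap.lineMap x y t₂ with hv
  have huseg : u ∈ segment ℝ x y := by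
    rw [segment_eq_image_lineMap]
    exact ⟨t₁, ⟨ht₁0, le_trans ht₁₂ ht₂1⟩, rfl⟩
  have hvseg : v ∈ segment ℝ x y := by
    rw [segment_eq_image_lineMap]
    exact ⟨t₂, ⟨le_trans ht₁0 ht₁₂, ht₂1⟩, rfl⟩
  have hdu : dist u x₀ ≤ a * r := by
    rw [hu, ← hx₀, dist_lineMap_lineMap, Real.dist_eq]
    have h1 : |t₁ - t₀| = min A (a * r) / L := by
      rw [ht₁]; rw [show t₀ - min A (a * r) / L - t₀ = -(min A (a * r) / L) by ring,
        abs_neg, abs_of_nonneg hmin1]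
    rw [h1, div_mul_cancel₀ _ hL0.ne']
    exact min_le_right _ _
  have hdv : dist v x₀ ≤ a * r := by
    rw [hv, ← hx₀, dist_lineMap_lineMap, Real.dist_eq]
    have h1 : |t₂ - t₀| = min B (a * r) / L := by
      rw [ht₂]; rw [show t₀ + min B (a * r) / L - t₀ = min B (a * r) / L by ring,
        abs_of_nonneg hmin2]
    rw [h1, div_mul_cancel₀ _ hL0.ne']
    exact min_le_right _ _
  have hduv : a * r ≤ dist u v := by
    rw [hu, hv, dist_lineMap_lineMap, Real.dist_eq]
    have h1 : |t₁ - t₂| = (min A (a * r) + min B (a * r)) / L := by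
      rw [ht₁, ht₂, show t₀ - min A (a * r) / L - (t₀ + min B (a * r) / L)
          = -((min A (a * r) + min B (a * r)) / L) by ring, abs_neg,
        abs_of_nonneg (by positivity)]
    rw [h1, div_mul_cancel₀ _ hL0.ne']
    have hLar : a * r ≤ A + B := hAB ▸ hlen
    rcases le_total A (a * r) with h | h <;> rcases le_total B (a * r) with h' | h' <;>
      simp [min_eq_left, min_eq_right, h, h'] <;> linarith
  have hsub : segment ℝ u v ⊆ segment ℝ x y ∩ square p ((1 + a) * r) := by
    intro w hw
    constructor
    · exact (convex_segment x y).segment_subset huseg hvseg hw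
    · intro i
      have hwball : dist w x₀ ≤ a * r := by
        have : segment ℝ u v ⊆ Metric.closedBall x₀ (a * r) :=
          (convex_closedBall x₀ (a * r)).segment_subset
            (Metric.mem_closedBall.mpr hdu) (Metric.mem_closedBall.mpr hdv)
        exact Metric.mem_closedBall.mp (this hw)
      have h1 : |w i - x₀ i| ≤ a * r := le_trans (coord_le_dist w x₀ i) hwball
      have h2 : |x₀ i - p i| ≤ r := hx₀sq i
      calc |w i - p i| = |(w i - x₀ i) + (x₀ i - p i)| := by ring_nf
        _ ≤ |w i - x₀ i| + |x₀ i - p i| := abs_add_le _ _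
        _ ≤ a * r + r := add_le_add h1 h2
        _ = (1 + a) * r := by ring
  calc ENNReal.ofReal (a * r) ≤ ENNReal.ofReal (dist u v) := ENNReal.ofReal_le_ofReal hduv
    _ = edist u v := (edist_dist u v).symm
    _ = μH[1] (segment ℝ u v) := (hausdorffMeasure_segment u v).symm
    _ ≤ _ := measure_mono hsub

/-- Let `S` have congestion `c`, let `N` be the maximum over the quadtree cells of the
number of `α`-long segments of a cell, and let `N̂` satisfy `N̂ ≤ N ≤ γ'·N̂` with
`γ' = (1+δ)²/(1−δ)`. Then `ĉ = N̂·α/(1+α)` satisfies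
`long-cong(Q)/(√8·γ'·(1+α)/α) ≤ ĉ ≤ c` for every cell `Q` of the quadtree. -/
theorem stmt_15 (S : Finset (EuclideanSpace ℝ (Fin 2) × EuclideanSpace ℝ (Fin 2)))
    (cells : Finset (EuclideanSpace ℝ (Fin 2) × ℝ))
    (hrpos : ∀ Q ∈ cells, 0 < Q.2)
    (α δ c N Nhat γ' chat : ℝ) (hα : 0 < α) (hδ : 0 < δ) (hδ1 : δ < 1)
    (hc : ∀ (p : EuclideanSpace ℝ (Fin 2)) (ρ : ℝ), 0 < ρ →
      ∑ s ∈ S, (μH[1] (segment ℝ s.1 s.2 ∩ square p ρ)).toReal ≤ c * ρ)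
    (longSet : EuclideanSpace ℝ (Fin 2) × ℝ →
      Finset (EuclideanSpace ℝ (Fin 2) × EuclideanSpace ℝ (Fin 2)))
    (hlongSet : ∀ Q ∈ cells, ∀ s, s ∈ longSet Q ↔ s ∈ S ∧ α * Q.2 ≤ dist s.1 s.2 ∧
      (segment ℝ s.1 s.2 ∩ square Q.1 Q.2).Nonempty)
    (hγ' : γ' = (1 + δ) ^ 2 / (1 - δ))
    (hNub : ∀ Q ∈ cells, ((longSet Q).card : ℝ) ≤ N)
    (hNatt : ∃ Q ∈ cells, ((longSet Q).card : ℝ) = N)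
    (hest : Nhat ≤ N ∧ N ≤ γ' * Nhat)
    (hchat : chat = Nhat * α / (1 + α)) :
    (∀ Q ∈ cells,
        ((∑ s ∈ longSet Q, (μH[1] (segment ℝ s.1 s.2 ∩ square Q.1 Q.2)).toReal) / Q.2) /
          (Real.sqrt 8 * γ' * ((1 + α) / α)) ≤ chat) ∧
      chat ≤ c := by
  obtain ⟨hNhatN, hNγ⟩ := hest
  have hγpos : 0 < γ' := by
    rw [hγ']; apply div_pos (by positivity) (by linarith)
  have h1α : 0 < 1 + α := by linarith
  have hsqrt8 : 0 < Real.sqrt 8 := Real.sqrt_pos.mpr (by norm_num)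
  constructor
  · -- lower bound per cell
    intro Q hQ
    have hr : 0 < Q.2 := hrpos Q hQ
    set r := Q.2 with hrdef
    set Sg := ∑ s ∈ longSet Q, (μH[1] (segment ℝ s.1 s.2 ∩ square Q.1 r)).toReal with hSg
    have hterm : ∀ s ∈ longSet Q,
        (μH[1] (segment ℝ s.1 s.2 ∩ square Q.1 r)).toReal ≤ Real.sqrt 8 * r := by
      intro s _
      exact ENNReal.toReal_le_of_le_ofReal (by positivity) (clip_le s.1 s.2 Q.1 r hr.le)
    have hSgle : Sg ≤ ((longSet Q).card : ℝ) * (Real.sqrt 8 * r) := by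
      calc Sg ≤ ∑ _s ∈ longSet Q, Real.sqrt 8 * r := Finset.sum_le_sum hterm
        _ = ((longSet Q).card : ℝ) * (Real.sqrt 8 * r) := by
            rw [Finset.sum_const, nsmul_eq_mul]
    set D := Real.sqrt 8 * γ' * ((1 + α) / α) with hD
    have hDpos : 0 < D := by positivity
    rw [div_le_iff₀ hDpos, div_le_iff₀ hr]
    have hcard : ((longSet Q).card : ℝ) ≤ N := hNub Q hQ
    have hchatD : chat * D = Real.sqrt 8 * γ' * Nhat := by
      rw [hchat, hD]; field_simp
    calc Sg ≤ ((longSet Q).card : ℝ) * (Real.sqrt 8 * r) := hSgle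
      _ ≤ N * (Real.sqrt 8 * r) := by
          apply mul_le_mul_of_nonneg_right hcard (by positivity)
      _ ≤ γ' * Nhat * (Real.sqrt 8 * r) := by
          apply mul_le_mul_of_nonneg_right hNγ (by positivity)
      _ = Real.sqrt 8 * γ' * Nhat * r := by ring
      _ = chat * D * r := by rw [hchatD]
  · -- chat ≤ c
    obtain ⟨Q₀, hQ₀, hNcard⟩ := hNatt
    have hr₀ : 0 < Q₀.2 := hrpos Q₀ hQ₀
    set r₀ := Q₀.2 with hr₀def
    have hρ : 0 < (1 + α) * r₀ := by positivity
    have hterm : ∀ s ∈ longSet Q₀, α * r₀ ≤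
        (μH[1] (segment ℝ s.1 s.2 ∩ square Q₀.1 ((1 + α) * r₀))).toReal := by
      intro s hs
      rw [hlongSet Q₀ hQ₀ s] at hs
      obtain ⟨_, hlen, hne⟩ := hs
      have hge := clip_ge s.1 s.2 Q₀.1 hr₀ hα hlen hne
      have hfin : μH[1] (segment ℝ s.1 s.2 ∩ square Q₀.1 ((1 + α) * r₀)) ≠ ⊤ := by
        apply ne_of_lt
        calc μH[1] (segment ℝ s.1 s.2 ∩ square Q₀.1 ((1 + α) * r₀))
            ≤ μH[1] (segment ℝ s.1 s.2) := measure_mono Set.inter_subset_left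
          _ = edist s.1 s.2 := hausdorffMeasure_segment s.1 s.2
          _ < ⊤ := edist_lt_top s.1 s.2
      exact (ENNReal.ofReal_le_iff_le_toReal hfin).mp hge
    have hsum1 : N * (α * r₀) ≤
        ∑ s ∈ longSet Q₀, (μH[1] (segment ℝ s.1 s.2 ∩ square Q₀.1 ((1 + α) * r₀))).toReal := by
      rw [← hNcard]
      calc (((longSet Q₀).card : ℝ)) * (α * r₀)
          = ∑ _s ∈ longSet Q₀, α * r₀ := by rw [Finset.sum_const, nsmul_eq_mul]
        _ ≤ _ := Finset.sum_le_sum hterm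
    have hsub : longSet Q₀ ⊆ S := fun s hs => ((hlongSet Q₀ hQ₀ s).mp hs).1
    have hsum2 : ∑ s ∈ longSet Q₀, (μH[1] (segment ℝ s.1 s.2 ∩ square Q₀.1 ((1 + α) * r₀))).toReal
        ≤ ∑ s ∈ S, (μH[1] (segment ℝ s.1 s.2 ∩ square Q₀.1 ((1 + α) * r₀))).toReal :=
      Finset.sum_le_sum_of_subset_of_nonneg hsub (fun _ _ _ => ENNReal.toReal_nonneg)
    have hkey : N * (α * r₀) ≤ c * ((1 + α) * r₀) :=
      le_trans hsum1 (le_trans hsum2 (hc Q₀.1 _ hρ))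
    have hNα : N * α ≤ c * (1 + α) := by
      have := (mul_le_mul_iff_of_pos_right hr₀).mp (by
        calc N * α * r₀ = N * (α * r₀) := by ring
          _ ≤ c * ((1 + α) * r₀) := hkey
          _ = c * (1 + α) * r₀ := by ring)
      exact this
    rw [hchat, div_le_iff₀ h1α]
    calc Nhat * α ≤ N * α := mul_le_mul_of_nonneg_right hNhatN hα.le
      _ ≤ c * (1 + α) := hNα
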